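/- A word w is rich if and only if every prefix p of w has a palindromic suffix occurring exactly once in p. -/

import Mathlib

def Rich {A : Type*} (w : List A) : Prop :=
  {p : List A | p.reverse = p ∧ p <:+: w}.ncard = w.length + 1
def occ {A : Type*} [DecidableEq A] (u v : List A) : ℕ :=
  ((List.range (u.length + 1)).filter (fun i => v.isPrefixOf (u.drop i))).length

open List

section Aux

variable {A : Type*} [DecidableEq A]

/-- Finset of palindromic factors of `w`. -/
noncomputable def palF (w : List A) : Finset (List A) :=
  w.sublists.toFinset.filter (fun p => p.reverse = p ∧ p <:+: w)

lemma mem_palF {w p : List A} : p ∈ palF w ↔ p.reverse = p ∧ p <:+: w := by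
  simp only [palF, Finset.mem_filter, mem_toFinset, mem_sublists]
  exact ⟨fun h => h.2, fun h => ⟨h.2.sublist, h⟩⟩

lemma rich_iff (w : List A) : Rich w ↔ (palF w).card = w.length + 1 := by
  have : {p : List A | p.reverse = p ∧ p <:+: w} = ↑(palF w) := by
    ext p; simp [mem_palF]
  rw [Rich, this, Set.ncard_coe_finset]

/-- If `s` occurs as a factor of `u ++ [a]` not touching the end, it is a factor of `u`. -/
lemma infix_of_proper {s u t₁ t₂ : List A} {a : A}
    (h : t₁ ++ s ++ t₂ = u ++ [a]) (ht : t₂ ≠ []) : s <:+: u := by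
  rcases eq_nil_or_concat t₂ with rfl | ⟨t₂', b, rfl⟩
  · exact absurd rfl ht
  · rw [concat_eq_append, ← append_assoc] at h
    exact ⟨t₁, t₂', (List.append_inj' h (by simp)).1⟩

lemma infix_concat_cases {s u : List A} {a : A} (h : s <:+: u ++ [a]) :
    s <:+: u ∨ s <:+ u ++ [a] := by
  obtain ⟨t₁, t₂, ht⟩ := h
  rcases eq_or_ne t₂ [] with rfl | hne
  · right; exact ⟨t₁, by simpa using ht⟩
  · left; exact infix_of_proper ht hne

/-- A shorter palindromic suffix of `u ++ [a]` than another palindromic suffix occurs in `u`. -/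
lemma shorter_pal_suffix_infix {s₁ s₂ u : List A} {a : A}
    (p₁ : s₁.reverse = s₁) (p₂ : s₂.reverse = s₂)
    (h₁ : s₁ <:+ u ++ [a]) (h₂ : s₂ <:+ u ++ [a])
    (hl : s₁.length < s₂.length) : s₁ <:+: u := by
  have hsuf : s₁ <:+ s₂ := suffix_of_suffix_length_le h₁ h₂ hl.le
  have hpre : s₁ <+: s₂ := by
    have := reverse_prefix.2 hsuf
    rwa [p₁, p₂] at this
  obtain ⟨t, ht⟩ := hpre
  obtain ⟨r, hr⟩ := h₂
  have hteq : r ++ s₁ ++ t = u ++ [a] := by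
    rw [append_assoc, ht, hr]
  have htne : t ≠ [] := by
    rintro rfl
    rw [append_nil] at ht
    rw [ht] at hl
    omega
  exact infix_of_proper hteq htne

lemma unique_new {u : List A} {a : A} {s₁ s₂ : List A}
    (p₁ : s₁.reverse = s₁) (p₂ : s₂.reverse = s₂)
    (h₁ : s₁ <:+ u ++ [a]) (h₂ : s₂ <:+ u ++ [a])
    (n₁ : ¬ s₁ <:+: u) (n₂ : ¬ s₂ <:+: u) : s₁ = s₂ := by
  rcases lt_trichotomy s₁.length s₂.length with h | h | h
  · exact absurd (shorter_pal_suffix_infix p₁ p₂ h₁ h₂ h) n₁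
  · exact (suffix_of_suffix_length_le h₁ h₂ h.le).eq_of_length h
  · exact absurd (shorter_pal_suffix_infix p₂ p₁ h₂ h₁ h) n₂

lemma palF_subset {u : List A} {a : A} : palF u ⊆ palF (u ++ [a]) := by
  intro p hp
  rw [mem_palF] at hp ⊢
  exact ⟨hp.1, by simpa [concat_eq_append] using List.infix_concat (a := a) hp.2⟩

lemma mem_sdiff_palF {u : List A} {a : A} {s : List A} :
    s ∈ palF (u ++ [a]) \ palF u ↔ s.reverse = s ∧ s <:+ u ++ [a] ∧ ¬ s <:+: u := by
  rw [Finset.mem_sdiff, mem_palF, mem_palF]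
  constructor
  · rintro ⟨⟨hp, hi⟩, hn⟩
    have hni : ¬ s <:+: u := fun h => hn ⟨hp, h⟩
    rcases infix_concat_cases hi with h | h
    · exact absurd h hni
    · exact ⟨hp, h, hni⟩
  · rintro ⟨hp, hs, hn⟩
    exact ⟨⟨hp, hs.isInfix⟩, fun h => hn h.2⟩

lemma sdiff_card_le {u : List A} {a : A} : ((palF (u ++ [a])) \ palF u).card ≤ 1 := by
  rw [Finset.card_le_one]
  intro s hs t ht
  rw [mem_sdiff_palF] at hs ht
  exact unique_new hs.1 ht.1 hs.2.1 ht.2.1 hs.2.2 ht.2.2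

lemma palF_nil : (palF ([] : List A)).card = 1 := by
  have : palF ([] : List A) = {[]} := by
    ext p
    rw [mem_palF]
    simp [infix_nil]
    rintro rfl; rfl
  rw [this, Finset.card_singleton]

lemma palF_card_le (w : List A) : (palF w).card ≤ w.length + 1 := by
  induction w using List.reverseRecOn with
  | nil => simp [palF_nil]
  | append_singleton u a ih =>
    have h := Finset.card_sdiff_add_card_eq_card (palF_subset (u := u) (a := a))
    have h2 := sdiff_card_le (u := u) (a := a)
    simp only [length_append, length_cons, length_nil]
    omega

/-- The unioccurrence condition, phrased without `occ`. -/
def Cond (w : List A) : Prop :=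
  ∀ p : List A, p <+: w → p ≠ [] →
    ∃ s, s <:+ p ∧ s.reverse = s ∧ ¬ s <:+: p.dropLast

lemma main_equiv (w : List A) : (palF w).card = w.length + 1 ↔ Cond w := by
  induction w using List.reverseRecOn with
  | nil =>
    rw [palF_nil]
    constructor
    · intro _ p hp hne
      exact absurd (prefix_nil.1 hp) hne
    · intro _; rfl
  | append_singleton u a ih =>
    have hsum := Finset.card_sdiff_add_card_eq_card (palF_subset (u := u) (a := a))
    have hle1 := sdiff_card_le (u := u) (a := a)
    have hleu := palF_card_le u
    constructor
    · intro h p hp hne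
      have hlen : (palF (u ++ [a])).card = u.length + 2 := by
        simpa using h
      have hcu : (palF u).card = u.length + 1 := by omega
      have hsd : ((palF (u ++ [a])) \ palF u).card = 1 := by omega
      rcases prefix_concat_iff.1 hp with rfl | hp'
      · obtain ⟨s, hs⟩ := Finset.card_eq_one.1 hsd
        have hmem : s ∈ palF (u ++ [a]) \ palF u := by rw [hs]; exact Finset.mem_singleton_self s
        rw [mem_sdiff_palF] at hmem
        refine ⟨s, hmem.2.1, hmem.1, ?_⟩
        rw [dropLast_concat]
        exact hmem.2.2
      · exact (ih.1 hcu) p hp' hne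
    · intro hC
      have hCu : Cond u := fun p hp hne =>
        hC p (hp.trans (prefix_append u [a])) hne
      have hcu : (palF u).card = u.length + 1 := ih.2 hCu
      obtain ⟨s, hs, hpal2, hni⟩ := hC (u ++ [a]) (prefix_refl _) (by simp)
      rw [dropLast_concat] at hni
      have : s ∈ palF (u ++ [a]) \ palF u := mem_sdiff_palF.2 ⟨hpal2, hs, hni⟩
      have hpos : 0 < ((palF (u ++ [a])) \ palF u).card := Finset.card_pos.2 ⟨s, this⟩
      simp only [length_append, length_cons, length_nil]
      omega

lemma occ_pred_at_suffix {p s : List A} (hs : s <:+ p) :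
    s.isPrefixOf (p.drop (p.length - s.length)) = true := by
  obtain ⟨r, rfl⟩ := hs
  rw [isPrefixOf_iff_prefix]
  have : (r ++ s).length - s.length = r.length := by simp
  rw [this, drop_left]

lemma occ_eq_one {p s : List A} (hs : s <:+ p) (hn : ¬ s <:+: p.dropLast) :
    occ p s = 1 := by
  have hsne : s ≠ [] := fun h => hn (h ▸ nil_infix)
  have hpne : p ≠ [] := by
    rintro rfl
    exact hsne (suffix_nil.1 hs)
  have hsl : s.length ≤ p.length := hs.length_le
  have hslpos : 0 < s.length := length_pos_iff.2 hsne
  set i₀ := p.length - s.length with hi₀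
  have key : ∀ i ∈ range (p.length + 1),
      (s.isPrefixOf (p.drop i) = true ↔ (i == i₀) = true) := by
    intro i hi
    rw [mem_range] at hi
    constructor
    · intro hpre
      rw [isPrefixOf_iff_prefix] at hpre
      have hlen : s.length ≤ p.length - i := by
        have := hpre.length_le
        rwa [length_drop] at this
      have hile : i ≤ i₀ := by omega
      rcases eq_or_lt_of_le hile with rfl | hlt
      · simp
      · exfalso
        obtain ⟨t, ht⟩ := hpre
        have htne : t ≠ [] := by
          intro h
          rw [h, append_nil] at ht
          have : s.length = p.length - i := by rw [ht, length_drop]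
          omega
        have hp' : p.take i ++ s ++ t = p.dropLast ++ [p.getLast hpne] := by
          rw [append_assoc, ht, take_append_drop, dropLast_append_getLast]
        exact hn (infix_of_proper hp' htne)
    · intro hi'
      have : i = i₀ := by simpa using hi'
      subst this
      exact occ_pred_at_suffix hs
  have : occ p s = List.count i₀ (range (p.length + 1)) := by
    rw [occ, ← countP_eq_length_filter, count_eq_countP]
    exact countP_congr (by intro i hi; simpa using key i hi)
  rw [this]
  exact count_eq_one_of_mem nodup_range (mem_range.2 (by omega))

lemma not_infix_of_occ_one {p s : List A} (hpne : p ≠ []) (hs : s <:+ p)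
    (h1 : occ p s = 1) : ¬ s <:+: p.dropLast := by
  intro hinf
  obtain ⟨t₁, t₂, ht⟩ := hinf
  have hsl : s.length ≤ p.length := hs.length_le
  set i₀ := p.length - s.length with hi₀
  set i₁ := t₁.length with hi₁
  have hpfull : t₁ ++ s ++ t₂ ++ [p.getLast hpne] = p := by
    rw [ht, dropLast_append_getLast]
  have hlen : i₁ + s.length + t₂.length + 1 = p.length := by
    have := congrArg List.length hpfull
    simp only [length_append, length_cons, length_nil] at this
    omega
  have hmem₀ : i₀ ∈ (range (p.length + 1)).filter (fun i => s.isPrefixOf (p.drop i)) := by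
    rw [mem_filter, mem_range]
    exact ⟨by omega, occ_pred_at_suffix hs⟩
  have hmem₁ : i₁ ∈ (range (p.length + 1)).filter (fun i => s.isPrefixOf (p.drop i)) := by
    rw [mem_filter, mem_range]
    refine ⟨by omega, ?_⟩
    rw [isPrefixOf_iff_prefix]
    have : p.drop i₁ = s ++ (t₂ ++ [p.getLast hpne]) := by
      conv_lhs => rw [← hpfull]
      rw [append_assoc, append_assoc]
      exact drop_left
    rw [this]
    exact prefix_append s _
  obtain ⟨x, hx⟩ := List.length_eq_one_iff.1 h1
  rw [occ] at h1
  rw [hx] at hmem₀ hmem₁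
  simp only [mem_singleton] at hmem₀ hmem₁
  omega

end Aux

theorem stmt1 {A : Type*} [DecidableEq A] (w : List A) :
    Rich w ↔ ∀ p : List A, p <+: w →
      ∃ s : List A, s <:+ p ∧ s.reverse = s ∧ occ p s = 1 := by
  rw [rich_iff, main_equiv]
  constructor
  · intro hC p hp
    rcases eq_or_ne p [] with rfl | hne
    · exact ⟨[], suffix_refl _, rfl, by simp [occ]⟩
    · obtain ⟨s, hs, hpal, hni⟩ := hC p hp hne
      exact ⟨s, hs, hpal, occ_eq_one hs hni⟩
  · intro h p hp hne
    obtain ⟨s, hs, hpal, h1⟩ := h p hp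
    exact ⟨s, hs, hpal, not_infix_of_occ_one hne hs h1⟩
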